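/- Let f be a convenient and nondegenerate Laurent polynomial on the algebraic torus (ℂ*)ⁿ. Then f is strongly tame with respect to the metric i·Σᵢ (dzⁱ/zⁱ) ∧ (dz̄ⁱ/z̄ⁱ): for every constant C > 0, Σᵢ|zᵢ·∂f/∂zᵢ(z)|² − C·Σ_{i,j}|zᵢ·∂/∂zᵢ(z_j·∂f/∂z_j)(z)| → ∞ as the point z goes to infinity in the torus, i.e. for every C > 0 and K ∈ ℝ there is R > 0 such that Σᵢ|log|zᵢ|| ≥ R implies Σᵢ|zᵢ∂f/∂zᵢ(z)|² − C·Σ_{i,j}|zᵢ∂/∂zᵢ(z_j∂f/∂z_j)(z)| ≥ K. -/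

import Mathlib

open Finset
open scoped Classical
open Filter


private noncomputable def ipLin (n : ℕ) (t : Fin n → ℝ) : (Fin n → ℝ) →ₗ[ℝ] ℝ where
  toFun x := ∑ i, x i * t i
  map_add' a b := by simp [add_mul, Finset.sum_add_distrib]
  map_smul' c a := by simp [Finset.mul_sum, mul_assoc]

/-- bound a linear functional on a convex hull of a finite set -/
private lemma hull_ip_le {n : ℕ} (A' : Finset (Fin n → ℝ)) (t : Fin n → ℝ) (m : ℝ)
    (hb : ∀ y ∈ A', ∑ i, y i * t i ≤ m) :
    ∀ x ∈ convexHull ℝ (↑A' : Set (Fin n → ℝ)), ∑ i, x i * t i ≤ m := by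
  intro x hx
  obtain ⟨w, hw0, hw1, hwx⟩ := Finset.mem_convexHull.mp hx
  have hx' : x = ∑ y ∈ A', w y • y := by
    rw [← hwx, Finset.centerMass, hw1, inv_one, one_smul]; rfl
  have : ∑ i, x i * t i = ∑ y ∈ A', w y * ∑ i, y i * t i := by
    have := map_sum (ipLin n t) (fun y => w y • y) A'
    simp only [ipLin, LinearMap.coe_mk, AddHom.coe_mk] at this
    rw [hx']
    rw [this]
    refine Finset.sum_congr rfl fun y hy => ?_
    simp [Finset.mul_sum, mul_assoc]
  rw [this]
  calc ∑ y ∈ A', w y * ∑ i, y i * t i ≤ ∑ y ∈ A', w y * m :=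
        Finset.sum_le_sum fun y hy => mul_le_mul_of_nonneg_left (hb y hy) (hw0 y hy)
    _ = m := by rw [← Finset.sum_mul, hw1, one_mul]

/-- support function lower bound from `0 ∈ interior hull` -/
private lemma delta_bound {n : ℕ} (A' : Finset (Fin n → ℝ)) (hA' : A'.Nonempty)
    (hconv : (0 : Fin n → ℝ) ∈ interior (convexHull ℝ (↑A' : Set (Fin n → ℝ)))) :
    ∃ δ : ℝ, 0 < δ ∧ ∀ t : Fin n → ℝ,
      δ * ∑ i, |t i| ≤ A'.sup' hA' (fun y => ∑ i, y i * t i) := by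
  obtain ⟨ε, hε, hball⟩ := Metric.mem_nhds_iff.mp (mem_interior_iff_mem_nhds.mp hconv)
  refine ⟨ε / 2, by positivity, fun t => ?_⟩
  set x : Fin n → ℝ := fun i => if 0 ≤ t i then ε / 2 else -(ε / 2) with hxdef
  have hxmem : x ∈ convexHull ℝ (↑A' : Set (Fin n → ℝ)) := by
    apply hball
    rw [Metric.mem_ball, dist_zero_right]
    have : ‖x‖ ≤ ε / 2 := by
      rw [pi_norm_le_iff_of_nonneg (by positivity)]
      intro i
      simp only [hxdef, Real.norm_eq_abs]
      rcases le_or_gt 0 (t i) with h | h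
      · rw [if_pos h, abs_of_nonneg (by positivity)]
      · rw [if_neg (not_le.mpr h), abs_neg, abs_of_nonneg (by positivity)]
    linarith
  have h1 : ∑ i, x i * t i = (ε / 2) * ∑ i, |t i| := by
    rw [Finset.mul_sum]
    refine Finset.sum_congr rfl fun i _ => ?_
    simp only [hxdef]
    rcases le_or_gt 0 (t i) with h | h
    · rw [if_pos h, abs_of_nonneg h]
    · rw [if_neg (not_le.mpr h), abs_of_neg h]; ring
  have h2 := hull_ip_le A' t (A'.sup' hA' (fun y => ∑ i, y i * t i))
    (fun y hy => Finset.le_sup' (fun y => ∑ i, y i * t i) hy) x hxmem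
  linarith

/-- a positive convex combination of the points summing to zero -/
private lemma pos_weights {n : ℕ} (A' : Finset (Fin n → ℝ)) (hA' : A'.Nonempty)
    (hconv : (0 : Fin n → ℝ) ∈ interior (convexHull ℝ (↑A' : Set (Fin n → ℝ)))) :
    ∃ lam : (Fin n → ℝ) → ℝ, (∀ y ∈ A', 0 < lam y) ∧ ∑ y ∈ A', lam y = 1 ∧
      ∑ y ∈ A', lam y • y = 0 := by
  have hcard : (0:ℝ) < (A'.card : ℝ) := by
    exact_mod_cast Nat.pos_of_ne_zero (Finset.card_ne_zero_of_mem hA'.choose_spec)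
  set N : ℝ := (A'.card : ℝ)
  set b : Fin n → ℝ := ∑ y ∈ A', N⁻¹ • y with hbdef
  by_cases hb : b = 0
  · exact ⟨fun _ => N⁻¹, fun y _ => by positivity,
      by rw [Finset.sum_const, nsmul_eq_mul]; field_simp; rfl, hb ▸ rfl⟩
  · obtain ⟨ε', hε', hball⟩ := Metric.mem_nhds_iff.mp (mem_interior_iff_mem_nhds.mp hconv)
    have hnb : (0:ℝ) < ‖b‖ := norm_pos_iff.mpr hb
    set ε : ℝ := ε' / (2 * ‖b‖) with hεdef
    have hεpos : 0 < ε := by positivity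
    have hmem : -(ε • b) ∈ convexHull ℝ (↑A' : Set (Fin n → ℝ)) := by
      apply hball
      rw [Metric.mem_ball, dist_zero_right, norm_neg, norm_smul, Real.norm_eq_abs,
        abs_of_pos hεpos, hεdef]
      rw [div_mul_eq_mul_div, mul_comm]
      rw [div_lt_iff₀ (by positivity)]
      nlinarith
    obtain ⟨μ, hμ0, hμ1, hμx⟩ := Finset.mem_convexHull.mp hmem
    have hμx' : ∑ y ∈ A', μ y • y = -(ε • b) := by
      rw [← hμx, Finset.centerMass, hμ1, inv_one, one_smul]; rfl
    refine ⟨fun y => (1 + ε)⁻¹ * (μ y + ε * N⁻¹), fun y hy => by have := hμ0 y hy; positivity, ?_, ?_⟩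
    · rw [← Finset.mul_sum, Finset.sum_add_distrib, hμ1, Finset.sum_const, nsmul_eq_mul]
      have : (A'.card : ℝ) * (ε * N⁻¹) = ε := by field_simp; rfl
      rw [this]
      field_simp
    · have key : ∑ y ∈ A', (μ y + ε * N⁻¹) • y = 0 := by
        have : ∑ y ∈ A', (μ y + ε * N⁻¹) • y
            = ∑ y ∈ A', μ y • y + ε • ∑ y ∈ A', N⁻¹ • y := by
          rw [Finset.smul_sum, ← Finset.sum_add_distrib]
          refine Finset.sum_congr rfl fun y _ => ?_
          rw [add_smul, smul_smul]
        rw [this, hμx', ← hbdef, neg_add_cancel]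
      calc ∑ y ∈ A', ((1 + ε)⁻¹ * (μ y + ε * N⁻¹)) • y
          = (1 + ε)⁻¹ • ∑ y ∈ A', (μ y + ε * N⁻¹) • y := by
            rw [Finset.smul_sum]
            exact Finset.sum_congr rfl fun y _ => by rw [smul_smul]
        _ = 0 := by rw [key, smul_zero]


/-- separation: a functional vanishing on `span S'` and negative on `B'` -/
private lemma separation_lemma {n : ℕ} (S' B' : Finset (Fin n → ℝ))
    (hdisj : ∀ x ∈ convexHull ℝ (↑B' : Set (Fin n → ℝ)),
      x ∉ Submodule.span ℝ (↑S' : Set (Fin n → ℝ))) :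
    ∃ l : Fin n → ℝ, (∀ s ∈ S', ∑ i, s i * l i = 0) ∧ (∀ b ∈ B', ∑ i, b i * l i < 0) := by
  rcases B'.eq_empty_or_nonempty with hB | hB
  · exact ⟨0, fun s _ => by simp, fun b hb => by simp [hB] at hb⟩
  · have hC : IsCompact (convexHull ℝ (↑B' : Set (Fin n → ℝ))) :=
      B'.finite_toSet.isCompact_convexHull ℝ
    have hCc : Convex ℝ (convexHull ℝ (↑B' : Set (Fin n → ℝ))) := convex_convexHull _ _
    have hV : IsClosed ((Submodule.span ℝ (↑S' : Set (Fin n → ℝ)) : Submodule ℝ _) :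
        Set (Fin n → ℝ)) := Submodule.closed_of_finiteDimensional _
    have hVc : Convex ℝ ((Submodule.span ℝ (↑S' : Set (Fin n → ℝ)) : Submodule ℝ _) :
        Set (Fin n → ℝ)) := (Submodule.span ℝ _).convex
    have hdis : Disjoint (convexHull ℝ (↑B' : Set (Fin n → ℝ)))
        ((Submodule.span ℝ (↑S' : Set (Fin n → ℝ)) : Submodule ℝ _) : Set (Fin n → ℝ)) :=
      Set.disjoint_left.mpr fun x hx hx' => hdisj x hx hx'
    obtain ⟨f, u, v, hfu, huv, hfv⟩ :=
      geometric_hahn_banach_compact_closed hCc hC hVc hV hdis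
    -- f vanishes on the span
    have hf0 : ∀ x ∈ Submodule.span ℝ (↑S' : Set (Fin n → ℝ)), f x = 0 := by
      intro x hx
      by_contra hfx
      have h1 : ∀ c : ℝ, v < c * f x := by
        intro c
        have := hfv (c • x) (Submodule.smul_mem _ c hx)
        simpa using this
      rcases lt_or_gt_of_ne hfx with h | h
      · have := h1 ((v - 1) / f x)
        rw [div_mul_cancel₀ _ (ne_of_lt h)] at this; linarith
      · have := h1 ((v - 1) / f x)
        rw [div_mul_cancel₀ _ (ne_of_gt h)] at this; linarith
    have hv0 : v < 0 := by
      have := hfv 0 (Submodule.zero_mem _)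
      simpa using this
    refine ⟨fun i => f (Pi.single i 1), ?_, ?_⟩
    · intro s hs
      have : (∑ i, s i * f (Pi.single i 1)) = f s := by
        have hrep : s = ∑ i, s i • (Pi.single i (1:ℝ) : Fin n → ℝ) := by
          funext j
          simp [Pi.single_apply, Finset.sum_apply, mul_ite]
        conv_rhs => rw [hrep]
        rw [map_sum]
        exact Finset.sum_congr rfl fun i _ => by rw [map_smul]; rfl
      rw [this]
      exact hf0 s (Submodule.subset_span hs)
    · intro b hb
      have : (∑ i, b i * f (Pi.single i 1)) = f b := by
        have hrep : b = ∑ i, b i • (Pi.single i (1:ℝ) : Fin n → ℝ) := by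
          funext j
          simp [Pi.single_apply, Finset.sum_apply, mul_ite]
        conv_rhs => rw [hrep]
        rw [map_sum]
        exact Finset.sum_congr rfl fun i _ => by rw [map_smul]; rfl
      rw [this]
      have := hfu b (subset_convexHull ℝ _ hb)
      linarith

/-- pointwise limits of affine functions on a finite set are affine -/
private lemma affine_limit {n : ℕ} {ι : Type*} (S : Finset ι) (u : ι → Fin n → ℝ)
    (t : ℕ → Fin n → ℝ) (cc : ℕ → ℝ) (g : ι → ℝ)
    (h : ∀ s ∈ S, Tendsto (fun k => (∑ i, u s i * t k i) + cc k) atTop (nhds (g s))) :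
    ∃ p : Fin n → ℝ, ∃ q : ℝ, ∀ s ∈ S, g s = (∑ i, u s i * p i) + q := by
  classical
  set T : ((Fin n → ℝ) × ℝ) →ₗ[ℝ] ({ x // x ∈ S } → ℝ) :=
    { toFun := fun pq => fun s => (∑ i, u s.1 i * pq.1 i) + pq.2
      map_add' := by
        intro a b; funext s
        simp [mul_add, Finset.sum_add_distrib]; ring
      map_smul' := by
        intro c a; funext s
        simp only [Prod.smul_fst, Prod.smul_snd, smul_eq_mul, Finset.mul_sum,
          RingHom.id_apply, Pi.smul_apply]
        rw [mul_add, Finset.mul_sum]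
        congr 1
        exact Finset.sum_congr rfl fun i _ => by ring }
  have hclosed : IsClosed ((LinearMap.range T : Submodule ℝ _) : Set ({ x // x ∈ S } → ℝ)) :=
    Submodule.closed_of_finiteDimensional _
  have htend : Tendsto (fun k => T (t k, cc k)) atTop (nhds (fun s : { x // x ∈ S } => g s.1)) := by
    rw [tendsto_pi_nhds]
    intro s
    exact h s.1 s.2
  have hmem : (fun s : { x // x ∈ S } => g s.1) ∈ LinearMap.range T :=
    hclosed.mem_of_tendsto htend (Filter.Eventually.of_forall fun k => ⟨(t k, cc k), rfl⟩)
  obtain ⟨⟨p, q⟩, hpq⟩ := hmem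
  exact ⟨p, q, fun s hs => (congrFun hpq ⟨s, hs⟩).symm⟩


set_option maxHeartbeats 2000000 in
/-- **Strong tameness of a convenient nondegenerate Laurent polynomial on the torus.**
Let `f(z) = Σ_{α∈A} c_α z^α` be a convenient and nondegenerate Laurent polynomial on
`(ℂ*)ⁿ`.  Then for every `C > 0`,
`Σᵢ|zᵢ∂f/∂zᵢ|² − C·Σ_{i,j}|zᵢ∂/∂zᵢ(z_j∂f/∂z_j)| → ∞` as `Σᵢ|log|zᵢ|| → ∞`,
where `zᵢ∂f/∂zᵢ = Σ_α c_α αᵢ z^α` and `zᵢ∂/∂zᵢ(z_j∂f/∂z_j) = Σ_α c_α αᵢα_j z^α`. -/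
theorem strong_tameness_laurent
    (n : ℕ) (hn : 1 ≤ n) (A : Finset (Fin n → ℤ)) (hA : A.Nonempty)
    (c : (Fin n → ℤ) → ℂ) (hc : ∀ α ∈ A, c α ≠ 0)
    -- `f` is convenient: `0` lies in the interior of the Newton polyhedron
    (hconv : (0 : Fin n → ℝ) ∈
      interior (convexHull ℝ ((fun (α : Fin n → ℤ) (i : Fin n) => (α i : ℝ)) '' A)))
    -- `f` is nondegenerate: for every face of positive dimension, the system
    -- `f^{Δ'} = f₁^{Δ'} = ⋯ = f_n^{Δ'} = 0` has no solution in the torus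
    (hnd : ∀ F : Set (Fin n → ℝ),
      IsExposed ℝ (convexHull ℝ ((fun (α : Fin n → ℤ) (i : Fin n) => (α i : ℝ)) '' A)) F →
      0 < Module.finrank ℝ (vectorSpan ℝ F) →
      ¬ ∃ z : Fin n → ℂ, (∀ i, z i ≠ 0) ∧
        (∑ α ∈ A.filter (fun α => (fun i => (α i : ℝ)) ∈ F),
            c α * ∏ i, z i ^ (α i)) = 0 ∧
        ∀ j, (∑ α ∈ A.filter (fun α => (fun i => (α i : ℝ)) ∈ F),
            c α * (α j : ℂ) * ∏ i, z i ^ (α i)) = 0) :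
    ∀ C : ℝ, 0 < C → ∀ K : ℝ, ∃ R : ℝ, 0 < R ∧
      ∀ z : Fin n → ℂ, (∀ i, z i ≠ 0) →
        R ≤ ∑ i, |Real.log ‖z i‖| →
        K ≤ (∑ i, ‖∑ α ∈ A, c α * (α i : ℂ) * ∏ l, z l ^ (α l)‖ ^ 2)
            - C * ∑ i, ∑ j,
                ‖∑ α ∈ A, c α * (α i : ℂ) * (α j : ℂ) * ∏ l, z l ^ (α l)‖ := by
  intro C hC K
  by_contra hcon
  push_neg at hcon
  -- the cast map and the real Newton polytope
  set ca : (Fin n → ℤ) → (Fin n → ℝ) := fun α i => (α i : ℝ) with hca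
  have hcainj : Function.Injective ca := by
    intro a b hab
    funext i
    have h2 := congrFun hab i
    simp only [hca] at h2
    exact_mod_cast h2
  set A' : Finset (Fin n → ℝ) := A.image ca with hA'def
  have hA'coe : (↑A' : Set (Fin n → ℝ)) = ca '' ↑A := Finset.coe_image
  have hA' : A'.Nonempty := hA.image _
  have hconv' : (0 : Fin n → ℝ) ∈ interior (convexHull ℝ (↑A' : Set (Fin n → ℝ))) := by
    rw [hA'coe]; exact hconv
  obtain ⟨δ, hδ, hδsup⟩ := delta_bound A' hA' hconv'
  -- choose a sequence of bad points
  have hseq : ∀ k : ℕ, ∃ z : Fin n → ℂ, (∀ i, z i ≠ 0) ∧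
      ((k : ℝ) + 1) ≤ (∑ i, |Real.log (‖ (z i)‖)|) ∧
      (∑ i, ‖ (∑ α ∈ A, c α * (α i : ℂ) * ∏ l, z l ^ (α l))‖ ^ 2)
        - C * ∑ i, ∑ j,
            ‖ (∑ α ∈ A, c α * (α i : ℂ) * (α j : ℂ) * ∏ l, z l ^ (α l))‖ < K :=
    fun k => hcon ((k : ℝ) + 1) (by positivity)
  choose z hz0 hzR hzK using hseq
  set t : ℕ → Fin n → ℝ := fun k i => Real.log (‖ (z k i)‖) with ht
  set M : ℕ → ℝ := fun k => A'.sup' hA' (fun y => ∑ i, y i * t k i) with hM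
  have habs : ∀ k i, 0 < ‖ (z k i)‖ := fun k i => norm_pos_iff.mpr (hz0 k i)
  -- basic bounds
  have hle : ∀ k, ∀ α ∈ A, (∑ i, (α i : ℝ) * t k i) ≤ M k := by
    intro k α hα
    exact Finset.le_sup' (fun y => ∑ i, y i * t k i) (Finset.mem_image_of_mem ca hα)
  have hMlow : ∀ k : ℕ, δ * ((k : ℝ) + 1) ≤ M k := by
    intro k
    calc δ * ((k : ℝ) + 1) ≤ δ * ∑ i, |t k i| :=
          mul_le_mul_of_nonneg_left (hzR k) hδ.le
      _ ≤ M k := hδsup (t k)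
  set e : ℕ → (Fin n → ℤ) → ℝ := fun (k : ℕ) (α : Fin n → ℤ) => (∑ i, (α i : ℝ) * t k i) - M k with he
  have hele : ∀ k, ∀ α ∈ A, e k α ≤ 0 := fun k α hα => sub_nonpos.mpr (hle k α hα)
  set r : ℕ → (Fin n → ℤ) → ℝ := fun (k : ℕ) (α : Fin n → ℤ) => Real.exp (min (e k α) 0) with hr
  have hrA : ∀ k, ∀ α ∈ A, r k α = Real.exp (e k α) := by
    intro k α hα
    rw [hr]
    simp only [min_eq_left (hele k α hα)]
  set w : ℕ → Fin n → ℂ := fun k i => z k i / (‖ (z k i)‖ : ℂ) with hw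
  have hwabs : ∀ k i, ‖ (w k i)‖ = 1 := by
    intro k i
    rw [hw]
    simp only [norm_div, Complex.norm_real, Real.norm_eq_abs, abs_of_pos (habs k i)]
    exact div_self (ne_of_gt (habs k i))
  -- compactness
  have hrmem : ∀ k, (fun α => r k α) ∈
      Set.univ.pi (fun _ : (Fin n → ℤ) => Set.Icc (0:ℝ) 1) := by
    intro k
    rw [Set.mem_univ_pi]
    intro α
    constructor
    · positivity
    · exact Real.exp_le_one_iff.mpr (min_le_right _ _)
  have hwmem : ∀ k, (fun i => w k i) ∈
      Set.univ.pi (fun _ : Fin n => Metric.sphere (0:ℂ) 1) := by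
    intro k
    rw [Set.mem_univ_pi]
    intro i
    rw [mem_sphere_zero_iff_norm]
    exact hwabs k i
  have hcompact : IsCompact ((Set.univ.pi fun _ : (Fin n → ℤ) => Set.Icc (0:ℝ) 1) ×ˢ
      (Set.univ.pi fun _ : Fin n => Metric.sphere (0:ℂ) 1)) :=
    (isCompact_univ_pi fun _ => isCompact_Icc).prod
      (isCompact_univ_pi fun _ => isCompact_sphere _ _)
  obtain ⟨⟨rr, ww⟩, hlim_mem, φ, hφ, hφlim⟩ := hcompact.tendsto_subseq
    (x := fun k => ((fun α => r k α, fun i => w k i) :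
      ((Fin n → ℤ) → ℝ) × (Fin n → ℂ)))
    (fun k => Set.mk_mem_prod (hrmem k) (hwmem k))
  -- componentwise limits
  have hrlim : ∀ α, Tendsto (fun k => r (φ k) α) atTop (nhds (rr α)) := by
    intro α
    have h1 : Tendsto (fun k => (fun α => r (φ k) α, fun i => w (φ k) i).1 α) atTop
        (nhds (rr α)) :=
      (((continuous_apply α).comp continuous_fst).tendsto _).comp hφlim
    exact h1
  have hwlim : ∀ i, Tendsto (fun k => w (φ k) i) atTop (nhds (ww i)) := by
    intro i
    have h1 : Tendsto (fun k => (fun α => r (φ k) α, fun i => w (φ k) i).2 i) atTop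
        (nhds (ww i)) :=
      (((continuous_apply i).comp continuous_snd).tendsto _).comp hφlim
    exact h1
  have hrr01 : ∀ α, rr α ∈ Set.Icc (0:ℝ) 1 := by
    intro α
    exact (Set.mem_univ_pi.mp hlim_mem.1) α
  have hwwabs : ∀ i, ‖ (ww i)‖ = 1 := by
    intro i
    have := (Set.mem_univ_pi.mp hlim_mem.2) i
    rwa [mem_sphere_zero_iff_norm] at this
  have hwwne : ∀ i, ww i ≠ 0 := by
    intro i h0
    have := hwwabs i
    rw [h0] at this
    simp at this
  -- the distinguished subsets
  set S : Finset (Fin n → ℤ) := A.filter (fun α => rr α ≠ 0) with hS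
  set B : Finset (Fin n → ℤ) := A \ S with hB
  have hrrpos : ∀ α ∈ S, 0 < rr α := by
    intro α hα
    rcases Finset.mem_filter.mp hα with ⟨-, hne⟩
    exact lt_of_le_of_ne (hrr01 α).1 (Ne.symm hne)
  have hBzero : ∀ α ∈ B, rr α = 0 := by
    intro α hα
    rcases Finset.mem_sdiff.mp hα with ⟨hαA, hαS⟩
    by_contra hne
    exact hαS (Finset.mem_filter.mpr ⟨hαA, hne⟩)
  -- limits of the exponents
  have hSlim : ∀ α ∈ S, Tendsto (fun k => e (φ k) α) atTop (nhds (Real.log (rr α))) := by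
    intro α hα
    have hαA : α ∈ A := Finset.mem_filter.mp hα |>.1
    have h1 : Tendsto (fun k => Real.log (r (φ k) α)) atTop (nhds (Real.log (rr α))) :=
      ((Real.continuousAt_log (ne_of_gt (hrrpos α hα))).tendsto).comp (hrlim α)
    have h2 : (fun k => Real.log (r (φ k) α)) = fun k => e (φ k) α := by
      funext k
      rw [hrA (φ k) α hαA, Real.log_exp]
    rwa [h2] at h1
  have hBlim : ∀ α ∈ B, Tendsto (fun k => e (φ k) α) atTop atBot := by
    intro α hα
    have hαA : α ∈ A := Finset.mem_sdiff.mp hα |>.1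
    have h0 : Tendsto (fun k => r (φ k) α) atTop (nhds 0) := hBzero α hα ▸ hrlim α
    have h1 : Tendsto (fun k => r (φ k) α) atTop (nhdsWithin 0 {0}ᶜ) :=
      tendsto_nhdsWithin_of_tendsto_nhds_of_eventually_within _ h0
        (Eventually.of_forall fun k => by
          simp only [Set.mem_compl_iff, Set.mem_singleton_iff]
          positivity)
    have h2 : Tendsto (fun k => Real.log (r (φ k) α)) atTop atBot :=
      Real.tendsto_log_nhdsNE_zero.comp h1
    have h3 : (fun k => Real.log (r (φ k) α)) = fun k => e (φ k) α := by
      funext k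
      rw [hrA (φ k) α hαA, Real.log_exp]
    rwa [h3] at h2
  -- S is nonempty
  have hSne : S.Nonempty := by
    have hone : ∀ k : ℕ, (1:ℝ) ≤ ∑ α ∈ A, r k α := by
      intro k
      obtain ⟨y, hy, hyM⟩ := Finset.exists_mem_eq_sup' hA' (fun y => ∑ i, y i * t k i)
      obtain ⟨α, hαA, hαy⟩ := Finset.mem_image.mp hy
      have hMk : M k = ∑ i, (α i : ℝ) * t k i := by
        simp only [hM]
        rw [hyM, ← hαy]
      have he0 : e k α = 0 := by
        simp only [he]
        rw [hMk, sub_self]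
      have hr1 : r k α = 1 := by rw [hrA k α hαA, he0, Real.exp_zero]
      calc (1:ℝ) = r k α := hr1.symm
        _ ≤ ∑ α ∈ A, r k α := Finset.single_le_sum (fun β _ => by positivity) hαA
    have hsumlim : Tendsto (fun k => ∑ α ∈ A, r (φ k) α) atTop (nhds (∑ α ∈ A, rr α)) :=
      tendsto_finset_sum _ (fun α _ => hrlim α)
    have hge : (1:ℝ) ≤ ∑ α ∈ A, rr α := ge_of_tendsto' hsumlim (fun k => hone (φ k))
    by_contra hSe
    rw [Finset.not_nonempty_iff_eq_empty] at hSe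
    have : ∑ α ∈ A, rr α = 0 := Finset.sum_eq_zero fun α hα => by
      by_contra hne
      have : α ∈ S := Finset.mem_filter.mpr ⟨hα, hne⟩
      rw [hSe] at this
      exact absurd this (Finset.notMem_empty α)
    linarith
  obtain ⟨α₀, hα₀S⟩ := hSne
  have hα₀A : α₀ ∈ A := Finset.mem_filter.mp hα₀S |>.1
  -- M tends to infinity along the subsequence
  have hMtop : Tendsto (fun k => M (φ k)) atTop atTop := by
    have h1 : Tendsto (fun k : ℕ => δ * ((k : ℝ) + 1)) atTop atTop :=
      (tendsto_atTop_add_const_right atTop 1 (tendsto_natCast_atTop_atTop (R := ℝ))).const_mul_atTop hδ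
    refine tendsto_atTop_mono (fun k => ?_) h1
    calc δ * ((k : ℝ) + 1) ≤ δ * ((φ k : ℝ) + 1) := by
          have : (k : ℝ) ≤ (φ k : ℝ) := by exact_mod_cast hφ.le_apply
          nlinarith
      _ ≤ M (φ k) := hMlow (φ k)
  -- monomial factorization
  have hxexp : ∀ x : ℝ, 0 < x → ∀ m : ℤ, x ^ m = Real.exp ((m : ℝ) * Real.log x) := by
    intro x hx m
    rw [← Real.log_zpow, Real.exp_log (zpow_pos hx m)]
  have hfac : ∀ k : ℕ, ∀ α ∈ A,
      (∏ l, z k l ^ (α l)) * (Real.exp (-(M k)) : ℂ)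
        = (r k α : ℂ) * ∏ l, (w k l) ^ (α l) := by
    intro k α hα
    have hzfac : ∀ l, z k l = (‖ (z k l)‖ : ℂ) * w k l := by
      intro l
      rw [hw]
      simp only
      rw [mul_div_cancel₀]
      exact_mod_cast (ne_of_gt (habs k l))
    have h1 : (∏ l, z k l ^ (α l)) =
        (∏ l, ((‖ (z k l)‖ : ℂ)) ^ (α l)) * ∏ l, (w k l) ^ (α l) := by
      rw [← Finset.prod_mul_distrib]
      refine Finset.prod_congr rfl fun l _ => ?_
      conv_lhs => rw [hzfac l]
      rw [mul_zpow]
    have h2 : (∏ l, ((‖ (z k l)‖ : ℂ)) ^ (α l)) =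
        ((Real.exp (∑ i, (α i : ℝ) * t k i) : ℝ) : ℂ) := by
      rw [Real.exp_sum, Complex.ofReal_prod]
      exact Finset.prod_congr rfl fun l _ => by
        rw [← Complex.ofReal_zpow, hxexp _ (habs k l)]
    rw [h1, h2]
    have h3 : ((Real.exp (∑ i, (α i : ℝ) * t k i) : ℝ) : ℂ) * (Real.exp (-(M k)) : ℂ)
        = (r k α : ℂ) := by
      rw [← Complex.ofReal_mul, ← Real.exp_add, hrA k α hα]
      simp only [he]
      ring_nf
    rw [mul_right_comm, h3]
  -- limits of normalized monomials
  set v : (Fin n → ℤ) → ℂ := fun α => (rr α : ℂ) * ∏ l, (ww l) ^ (α l) with hv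
  have hvlim : ∀ α ∈ A, Tendsto
      (fun k => (∏ l, z (φ k) l ^ (α l)) * (Real.exp (-(M (φ k))) : ℂ))
      atTop (nhds (v α)) := by
    intro α hα
    have heq : (fun k => (∏ l, z (φ k) l ^ (α l)) * (Real.exp (-(M (φ k))) : ℂ))
        = fun k => (r (φ k) α : ℂ) * ∏ l, (w (φ k) l) ^ (α l) := by
      funext k
      exact hfac (φ k) α hα
    rw [heq]
    refine Tendsto.mul ?_ ?_
    · exact (Complex.continuous_ofReal.tendsto _).comp (hrlim α)
    · exact tendsto_finset_prod _ fun l _ => (hwlim l).zpow₀ (α l) (Or.inl (hwwne l))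
  have hvB : ∀ α ∈ A, α ∉ S → v α = 0 := by
    intro α hα hαS
    have : rr α = 0 := by
      by_contra hne
      exact hαS (Finset.mem_filter.mpr ⟨hα, hne⟩)
    rw [hv]
    simp [this]
  -- the limit gradient
  set L : Fin n → ℂ := fun j => ∑ α ∈ A, c α * (α j : ℂ) * v α with hL
  have hLlim : ∀ j, Tendsto
      (fun k => (∑ α ∈ A, c α * (α j : ℂ) * ∏ l, z (φ k) l ^ (α l))
        * (Real.exp (-(M (φ k))) : ℂ)) atTop (nhds (L j)) := by
    intro j
    have heq : (fun k => (∑ α ∈ A, c α * (α j : ℂ) * ∏ l, z (φ k) l ^ (α l))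
        * (Real.exp (-(M (φ k))) : ℂ))
        = fun k => ∑ α ∈ A, (c α * (α j : ℂ)) *
            ((∏ l, z (φ k) l ^ (α l)) * (Real.exp (-(M (φ k))) : ℂ)) := by
      funext k
      rw [Finset.sum_mul]
      exact Finset.sum_congr rfl fun α _ => by ring
    rw [heq]
    have hLj : L j = ∑ α ∈ A, (c α * (α j : ℂ)) * v α := by
      rw [hL]
    rw [hLj]
    exact tendsto_finset_sum _ fun α hα => (hvlim α hα).const_mul _
  -- Hessian bound
  set D : ℝ := ∑ i, ∑ j, ∑ α ∈ A, ‖ (c α)‖ * |(α i : ℝ)| * |(α j : ℝ)| with hD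
  have hD0 : 0 ≤ D := by
    rw [hD]
    refine Finset.sum_nonneg fun i _ => Finset.sum_nonneg fun j _ =>
      Finset.sum_nonneg fun α _ => by positivity
  have hmono_abs : ∀ k : ℕ, ∀ α ∈ A,
      ‖ (∏ l, z k l ^ (α l))‖ ≤ Real.exp (M k) := by
    intro k α hα
    have h1 : ‖ (∏ l, z k l ^ (α l))‖ = Real.exp (∑ i, (α i : ℝ) * t k i) := by
      rw [norm_prod, Real.exp_sum]
      refine Finset.prod_congr rfl fun l _ => ?_
      rw [norm_zpow, hxexp _ (habs k l)]
    rw [h1]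
    exact Real.exp_le_exp.mpr (hle k α hα)
  have hhess : ∀ k : ℕ,
      (∑ i, ∑ j, ‖ (∑ α ∈ A, c α * (α i : ℂ) * (α j : ℂ) * ∏ l, z k l ^ (α l))‖)
        ≤ D * Real.exp (M k) := by
    intro k
    rw [hD, Finset.sum_mul]
    refine Finset.sum_le_sum fun i _ => ?_
    rw [Finset.sum_mul]
    refine Finset.sum_le_sum fun j _ => ?_
    rw [Finset.sum_mul]
    calc ‖ (∑ α ∈ A, c α * (α i : ℂ) * (α j : ℂ) * ∏ l, z k l ^ (α l))‖
        ≤ ∑ α ∈ A, ‖ (c α * (α i : ℂ) * (α j : ℂ) * ∏ l, z k l ^ (α l))‖ :=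
          norm_sum_le _ _
      _ ≤ ∑ α ∈ A, (‖ (c α)‖ * |(α i : ℝ)| * |(α j : ℝ)|) * Real.exp (M k) := by
          refine Finset.sum_le_sum fun α hα => ?_
          rw [norm_mul, norm_mul, norm_mul]
          have hci : ‖ ((α i : ℂ))‖ = |(α i : ℝ)| := by
            rw [Complex.norm_intCast]
          have hcj : ‖ ((α j : ℂ))‖ = |(α j : ℝ)| := by
            rw [Complex.norm_intCast]
          rw [hci, hcj]
          have := hmono_abs k α hα
          have hnn : 0 ≤ ‖ (c α)‖ * |(α i : ℝ)| * |(α j : ℝ)| := by positivity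
          calc ‖ (c α)‖ * |(α i : ℝ)| * |(α j : ℝ)| * ‖ (∏ l, z k l ^ (α l))‖
              ≤ ‖ (c α)‖ * |(α i : ℝ)| * |(α j : ℝ)| * Real.exp (M k) :=
                mul_le_mul_of_nonneg_left this hnn
            _ = _ := rfl
  -- the normalized gradient tends to zero
  have hL0 : ∀ j, L j = 0 := by
    have hgrow : ∀ k : ℕ,
        (∑ i, ‖ (∑ α ∈ A, c α * (α i : ℂ) * ∏ l, z k l ^ (α l))‖ ^ 2)
          ≤ K + C * (D * Real.exp (M k)) := by
      intro k
      have h1 := hzK k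
      have h2 := hhess k
      nlinarith [hhess k, hzK k]
    have hQle : ∀ k : ℕ,
        (∑ j, ‖ ((∑ α ∈ A, c α * (α j : ℂ) * ∏ l, z (φ k) l ^ (α l))
          * (Real.exp (-(M (φ k))) : ℂ))‖ ^ 2)
          ≤ K * Real.exp (-(M (φ k))) ^ 2 + C * D * Real.exp (-(M (φ k))) := by
      intro k
      have hexpand : ∀ j, ‖ ((∑ α ∈ A, c α * (α j : ℂ) * ∏ l, z (φ k) l ^ (α l))
          * (Real.exp (-(M (φ k))) : ℂ))‖ ^ 2
          = ‖ (∑ α ∈ A, c α * (α j : ℂ) * ∏ l, z (φ k) l ^ (α l))‖ ^ 2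
            * Real.exp (-(M (φ k))) ^ 2 := by
        intro j
        rw [norm_mul, Complex.norm_real, Real.norm_eq_abs, abs_of_pos (Real.exp_pos _), mul_pow]
      have hsum : (∑ j, ‖ ((∑ α ∈ A, c α * (α j : ℂ) * ∏ l, z (φ k) l ^ (α l))
          * (Real.exp (-(M (φ k))) : ℂ))‖ ^ 2)
          = (∑ j, ‖ (∑ α ∈ A, c α * (α j : ℂ) * ∏ l, z (φ k) l ^ (α l))‖ ^ 2)
            * Real.exp (-(M (φ k))) ^ 2 := by
        rw [Finset.sum_mul]
        exact Finset.sum_congr rfl fun j _ => hexpand j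
      rw [hsum]
      have hkey : Real.exp (M (φ k)) * Real.exp (-(M (φ k))) ^ 2
          = Real.exp (-(M (φ k))) := by
        rw [Real.exp_neg]
        rw [sq]
        rw [← mul_assoc, mul_inv_cancel₀ (Real.exp_ne_zero _), one_mul]
      have hg := hgrow (φ k)
      have hx2 : (0:ℝ) ≤ Real.exp (-(M (φ k))) ^ 2 := by positivity
      calc (∑ j, ‖ (∑ α ∈ A, c α * (α j : ℂ) * ∏ l, z (φ k) l ^ (α l))‖ ^ 2)
            * Real.exp (-(M (φ k))) ^ 2
          ≤ (K + C * (D * Real.exp (M (φ k)))) * Real.exp (-(M (φ k))) ^ 2 :=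
            mul_le_mul_of_nonneg_right hg hx2
        _ = K * Real.exp (-(M (φ k))) ^ 2
            + C * D * (Real.exp (M (φ k)) * Real.exp (-(M (φ k))) ^ 2) := by ring
        _ = K * Real.exp (-(M (φ k))) ^ 2 + C * D * Real.exp (-(M (φ k))) := by rw [hkey]
    have hexp0 : Tendsto (fun k => Real.exp (-(M (φ k)))) atTop (nhds 0) :=
      Real.tendsto_exp_atBot.comp (tendsto_neg_atTop_atBot.comp hMtop)
    have hrhs0 : Tendsto (fun k => K * Real.exp (-(M (φ k))) ^ 2
        + C * D * Real.exp (-(M (φ k)))) atTop (nhds 0) := by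
      have h1 : Tendsto (fun k => K * Real.exp (-(M (φ k))) ^ 2) atTop (nhds (K * 0 ^ 2)) :=
        ((hexp0.pow 2).const_mul K)
      have h2 : Tendsto (fun k => C * D * Real.exp (-(M (φ k)))) atTop (nhds (C * D * 0)) :=
        hexp0.const_mul _
      have := h1.add h2
      norm_num at this
      exact this
    have hQlim : Tendsto (fun k => ∑ j, ‖
        ((∑ α ∈ A, c α * (α j : ℂ) * ∏ l, z (φ k) l ^ (α l))
          * (Real.exp (-(M (φ k))) : ℂ))‖ ^ 2) atTop
        (nhds (∑ j, ‖ (L j)‖ ^ 2)) := by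
      refine tendsto_finset_sum _ fun j _ => ?_
      exact ((continuous_norm.tendsto _).comp (hLlim j)).pow 2
    have hfinal : (∑ j, ‖ (L j)‖ ^ 2) ≤ 0 :=
      le_of_tendsto_of_tendsto' hQlim hrhs0 hQle
    intro j
    have hnn : ∀ j' : Fin n, (j' ∈ Finset.univ) → 0 ≤ ‖ (L j')‖ ^ 2 :=
      fun j' _ => by positivity
    have hzero : ∑ j', ‖ (L j')‖ ^ 2 = 0 :=
      le_antisymm hfinal (Finset.sum_nonneg hnn)
    have := (Finset.sum_eq_zero_iff_of_nonneg hnn).mp hzero j (Finset.mem_univ j)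
    have habs0 : ‖ (L j)‖ = 0 := by
      nlinarith [norm_nonneg (L j)]
    exact norm_eq_zero.mp habs0
  -- sums over S
  have hLS : ∀ j, (∑ α ∈ S, c α * (α j : ℂ) * v α) = 0 := by
    intro j
    have hsub : S ⊆ A := Finset.filter_subset _ _
    have : (∑ α ∈ S, c α * (α j : ℂ) * v α) = ∑ α ∈ A, c α * (α j : ℂ) * v α := by
      refine Finset.sum_subset hsub fun α hαA hαS => ?_
      rw [hvB α hαA hαS, mul_zero]
    rw [this]
    exact hL0 j
  -- translated difference map
  set f0 : (Fin n → ℤ) → (Fin n → ℝ) := fun β => ca β - ca α₀ with hf0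
  have hf0inj : ∀ (T : Finset (Fin n → ℤ)), ∀ x ∈ T, ∀ y ∈ T, f0 x = f0 y → x = y := by
    intro T x _ y _ hxy
    apply hcainj
    simp only [hf0] at hxy
    exact sub_left_injective hxy
  have hediff : ∀ (k : ℕ) (β : Fin n → ℤ), e k β - e k α₀ = ∑ i, (f0 β) i * t k i := by
    intro k β
    calc e k β - e k α₀ = (∑ i, ca β i * t k i) - (∑ i, ca α₀ i * t k i) := by
          simp only [he, hca]
          ring
      _ = ∑ i, (ca β i * t k i - ca α₀ i * t k i) := (Finset.sum_sub_distrib _ _).symm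
      _ = ∑ i, (f0 β) i * t k i := Finset.sum_congr rfl fun i _ => by
          simp only [hf0, Pi.sub_apply]
          ring
  have heval : ∀ (T : Finset (Fin n → ℤ)) (g : (Fin n → ℤ) → ℝ) (k : ℕ),
      (∑ i, (∑ β ∈ T, g β • (f0 β)) i * t k i)
        = ∑ β ∈ T, g β * (e k β - e k α₀) := by
    intro T g k
    have h1 : ∀ i : Fin n, (∑ β ∈ T, g β • (f0 β)) i = ∑ β ∈ T, g β * (f0 β) i := by
      intro i
      simp [Finset.sum_apply]
    calc (∑ i, (∑ β ∈ T, g β • (f0 β)) i * t k i)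
        = ∑ i, ∑ β ∈ T, g β * ((f0 β) i * t k i) := by
          refine Finset.sum_congr rfl fun i _ => ?_
          rw [h1 i, Finset.sum_mul]
          exact Finset.sum_congr rfl fun β _ => by ring
      _ = ∑ β ∈ T, ∑ i, g β * ((f0 β) i * t k i) := Finset.sum_comm
      _ = ∑ β ∈ T, g β * (e k β - e k α₀) := by
          refine Finset.sum_congr rfl fun β _ => ?_
          rw [hediff k β, Finset.mul_sum]
  -- the key disjointness coming from the limits
  have hdisj : ∀ x ∈ convexHull ℝ (↑(B.image f0) : Set (Fin n → ℝ)),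
      x ∉ Submodule.span ℝ (↑(S.image f0) : Set (Fin n → ℝ)) := by
    intro x hx hxspan
    obtain ⟨ν, hν0, hν1, hνx⟩ := Finset.mem_convexHull.mp hx
    have hxrep : x = ∑ y ∈ B.image f0, ν y • y := by
      rw [← hνx, Finset.centerMass, hν1, inv_one, one_smul]; rfl
    obtain ⟨μ, -, hμx⟩ := Submodule.mem_span_finset.mp hxspan
    have hxrepB : x = ∑ β ∈ B, ν (f0 β) • f0 β := by
      rw [hxrep, Finset.sum_image (hf0inj B)]
    have hν1' : ∑ β ∈ B, ν (f0 β) = 1 := by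
      rw [← hν1, Finset.sum_image (hf0inj B)]
    have hxrepS : x = ∑ s ∈ S, μ (f0 s) • f0 s := by
      rw [← hμx, Finset.sum_image (hf0inj S)]
    have haS : Tendsto (fun k => ∑ i, x i * t (φ k) i) atTop
        (nhds (∑ s ∈ S, μ (f0 s) * (Real.log (rr s) - Real.log (rr α₀)))) := by
      have heq : (fun k => ∑ i, x i * t (φ k) i)
          = fun k => ∑ s ∈ S, μ (f0 s) * (e (φ k) s - e (φ k) α₀) := by
        funext k
        conv_lhs => rw [hxrepS]
        exact heval S (fun s => μ (f0 s)) (φ k)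
      rw [heq]
      exact tendsto_finset_sum _ fun s hs =>
        (((hSlim s hs).sub (hSlim α₀ hα₀S)).const_mul _)
    obtain ⟨β₀, hβ₀B, hβ₀pos⟩ : ∃ β ∈ B, 0 < ν (f0 β) := by
      by_contra hno
      push_neg at hno
      have hzero : ∑ β ∈ B, ν (f0 β) = 0 := Finset.sum_eq_zero fun β hβ =>
        le_antisymm (hno β hβ) (hν0 _ (Finset.mem_image_of_mem f0 hβ))
      rw [hzero] at hν1'
      exact absurd hν1' (by norm_num)
    have hβ₀A : β₀ ∈ A := Finset.mem_sdiff.mp hβ₀B |>.1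
    have hbound : ∀ k : ℕ, (∑ i, x i * t (φ k) i)
        ≤ ν (f0 β₀) * e (φ k) β₀ - e (φ k) α₀ := by
      intro k
      have hrep : (∑ i, x i * t (φ k) i)
          = ∑ β ∈ B, ν (f0 β) * (e (φ k) β - e (φ k) α₀) := by
        conv_lhs => rw [hxrepB]
        exact heval B (fun β => ν (f0 β)) (φ k)
      rw [hrep]
      have hsplit : ∑ β ∈ B, ν (f0 β) * (e (φ k) β - e (φ k) α₀)
          = (∑ β ∈ B, ν (f0 β) * e (φ k) β) - e (φ k) α₀ := by
        have : ∀ β ∈ B, ν (f0 β) * (e (φ k) β - e (φ k) α₀)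
            = ν (f0 β) * e (φ k) β - ν (f0 β) * e (φ k) α₀ := fun β _ => by ring
        rw [Finset.sum_congr rfl this, Finset.sum_sub_distrib, ← Finset.sum_mul, hν1',
          one_mul]
      rw [hsplit]
      have hmax : (∑ β ∈ B, ν (f0 β) * e (φ k) β) ≤ ν (f0 β₀) * e (φ k) β₀ := by
        calc (∑ β ∈ B, ν (f0 β) * e (φ k) β)
            ≤ ∑ β ∈ B, (if β = β₀ then ν (f0 β₀) * e (φ k) β₀ else 0) := by
              refine Finset.sum_le_sum fun β hβ => ?_
              by_cases hββ : β = β₀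
              · subst hββ
                rw [if_pos rfl]
              · rw [if_neg hββ]
                have hβA : β ∈ A := Finset.mem_sdiff.mp hβ |>.1
                exact mul_nonpos_of_nonneg_of_nonpos
                  (hν0 _ (Finset.mem_image_of_mem f0 hβ)) (hele (φ k) β hβA)
          _ = ν (f0 β₀) * e (φ k) β₀ := by
              rw [Finset.sum_ite_eq' B β₀, if_pos hβ₀B]
      linarith
    have hatBot : Tendsto (fun k => ∑ i, x i * t (φ k) i) atTop atBot := by
      refine tendsto_atBot_mono hbound ?_
      have h1 : Tendsto (fun k => ν (f0 β₀) * e (φ k) β₀) atTop atBot :=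
        (hBlim β₀ hβ₀B).const_mul_atBot hβ₀pos
      have h2 : Tendsto (fun k => -e (φ k) α₀) atTop (nhds (-(Real.log (rr α₀)))) :=
        (hSlim α₀ hα₀S).neg
      have h3 := h2.add_atBot h1
      have heq : (fun k => ν (f0 β₀) * e (φ k) β₀ - e (φ k) α₀)
          = fun k => -e (φ k) α₀ + ν (f0 β₀) * e (φ k) β₀ := by
        funext k; ring
      rw [heq]
      exact h3
    exact not_tendsto_atBot_of_tendsto_nhds haS hatBot
  obtain ⟨l, hlS0, hlB0⟩ := separation_lemma (S.image f0) (B.image f0) hdisj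
  set m : ℝ := ∑ i, ca α₀ i * l i with hm
  have hf0exp : ∀ β : Fin n → ℤ, (∑ i, (f0 β) i * l i)
      = (∑ i, ca β i * l i) - ∑ i, ca α₀ i * l i := by
    intro β
    rw [← Finset.sum_sub_distrib]
    refine Finset.sum_congr rfl fun i _ => ?_
    simp only [hf0, Pi.sub_apply]
    ring
  have hmS : ∀ s ∈ S, (∑ i, ca s i * l i) = m := by
    intro s hs
    have h1 := hlS0 (f0 s) (Finset.mem_image_of_mem f0 hs)
    rw [hf0exp s] at h1
    rw [hm]
    linarith
  have hmB : ∀ β ∈ B, (∑ i, ca β i * l i) < m := by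
    intro β hβ
    have h1 := hlB0 (f0 β) (Finset.mem_image_of_mem f0 hβ)
    rw [hf0exp β] at h1
    rw [hm]
    linarith
  -- case distinction on whether all of A survives
  rcases B.eq_empty_or_nonempty with hBe | hBne
  · -- B empty : S = A, M converges, contradiction with M → ∞
    have hSA : S = A := by
      have hsub : A ⊆ S := Finset.sdiff_eq_empty_iff_subset.mp hBe
      exact Finset.Subset.antisymm (Finset.filter_subset _ _) hsub
    obtain ⟨lam, hlam0, hlam1, hlamv⟩ := pos_weights A' hA' hconv'
    have hlam1' : ∑ α ∈ A, lam (ca α) = 1 := by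
      rw [← hlam1, hA'def, Finset.sum_image (fun x _ y _ h => hcainj h)]
    have hlamv' : ∑ α ∈ A, lam (ca α) • ca α = 0 := by
      rw [← hlamv, hA'def, Finset.sum_image (fun x _ y _ h => hcainj h)]
    have hMk : ∀ k : ℕ, M k = -(∑ α ∈ A, lam (ca α) * e k α) := by
      intro k
      have h1 : ∑ α ∈ A, lam (ca α) * (∑ i, ca α i * t k i) = 0 := by
        have h2 : (∑ i, (∑ α ∈ A, lam (ca α) • ca α) i * t k i) = 0 := by
          rw [hlamv']
          simp
        rw [← h2]
        have h3 : ∀ i : Fin n, (∑ α ∈ A, lam (ca α) • ca α) i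
            = ∑ α ∈ A, lam (ca α) * ca α i := by
          intro i
          simp [Finset.sum_apply]
        rw [Finset.sum_congr rfl fun i (_ : i ∈ Finset.univ) => by
          rw [h3 i, Finset.sum_mul]]
        rw [Finset.sum_comm]
        refine Finset.sum_congr rfl fun α _ => ?_
        rw [Finset.mul_sum]
        exact Finset.sum_congr rfl fun i _ => by ring
      have h4 : ∑ α ∈ A, lam (ca α) * e k α
          = (∑ α ∈ A, lam (ca α) * (∑ i, ca α i * t k i)) - (∑ α ∈ A, lam (ca α)) * M k := by
        rw [Finset.sum_mul, ← Finset.sum_sub_distrib]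
        refine Finset.sum_congr rfl fun α _ => ?_
        simp only [he, hca]
        ring
      rw [h4, h1, hlam1'] at *
      linarith [h4]
    have hMlim : Tendsto (fun k => M (φ k)) atTop
        (nhds (-(∑ α ∈ A, lam (ca α) * Real.log (rr α)))) := by
      have heq : (fun k => M (φ k)) = fun k => -(∑ α ∈ A, lam (ca α) * e (φ k) α) := by
        funext k
        exact hMk (φ k)
      rw [heq]
      refine Tendsto.neg (tendsto_finset_sum _ fun α hα => ?_)
      have hαS : α ∈ S := hSA ▸ hα
      exact (hSlim α hαS).const_mul _
    exact not_tendsto_atTop_of_tendsto_nhds hMlim hMtop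
  · -- B nonempty
    obtain ⟨β₁, hβ₁B⟩ := hBne
    have hlne : l ≠ 0 := by
      intro h0
      have h1 := hmB β₁ hβ₁B
      rw [hm, h0] at h1
      simp at h1
    have hmpos : 0 < m := by
      have hsup : A'.sup' hA' (fun y => ∑ i, y i * l i) ≤ m := by
        apply Finset.sup'_le
        intro y hy
        obtain ⟨α, hαA, rfl⟩ := Finset.mem_image.mp hy
        by_cases hαS : α ∈ S
        · exact le_of_eq (hmS α hαS)
        · exact le_of_lt (hmB α (Finset.mem_sdiff.mpr ⟨hαA, hαS⟩))
      obtain ⟨i0, hi0⟩ : ∃ i, l i ≠ 0 := by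
        by_contra hno
        push_neg at hno
        exact hlne (funext hno)
      have habsl : 0 < ∑ i, |l i| :=
        lt_of_lt_of_le (abs_pos.mpr hi0)
          (Finset.single_le_sum (fun i (_ : i ∈ Finset.univ) => abs_nonneg (l i))
            (Finset.mem_univ i0))
      have h2 := hδsup l
      nlinarith
    -- affine structure of the limit on S
    obtain ⟨p, q, hpq⟩ := affine_limit S ca (fun k => t (φ k)) (fun k => -(M (φ k)))
      (fun α => Real.log (rr α))
      (fun s hs => by
        have h := hSlim s hs
        have heq : (fun k => (∑ i, ca s i * t (φ k) i) + -(M (φ k)))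
            = fun k => e (φ k) s := by
          funext k
          simp only [he, hca]
          ring
        rw [heq]
        exact h)
    -- the witness point in the torus
    set zs : Fin n → ℂ := fun i => ((Real.exp (p i) : ℝ) : ℂ) * ww i with hzs
    have hzsne : ∀ i, zs i ≠ 0 := by
      intro i
      rw [hzs]
      exact mul_ne_zero (by exact_mod_cast Real.exp_ne_zero _) (hwwne i)
    have hmonos : ∀ α ∈ S, (∏ i, zs i ^ (α i)) = ((Real.exp (-q) : ℝ) : ℂ) * v α := by
      intro α hαS
      have h1 : (∏ i, zs i ^ (α i))
          = (∏ i, ((Real.exp (p i) : ℝ) : ℂ) ^ (α i)) * ∏ i, ww i ^ (α i) := by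
        rw [← Finset.prod_mul_distrib]
        refine Finset.prod_congr rfl fun i _ => ?_
        rw [hzs, mul_zpow]
      have h2 : (∏ i, ((Real.exp (p i) : ℝ) : ℂ) ^ (α i))
          = ((Real.exp (∑ i, (α i : ℝ) * p i) : ℝ) : ℂ) := by
        rw [Real.exp_sum, Complex.ofReal_prod]
        refine Finset.prod_congr rfl fun i _ => ?_
        rw [← Complex.ofReal_zpow, hxexp _ (Real.exp_pos _), Real.log_exp]
      have h3 : (∑ i, (α i : ℝ) * p i) = Real.log (rr α) - q := by
        have h := hpq α hαS
        simp only [hca] at h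
        linarith
      have h4 : Real.exp (Real.log (rr α) - q) = rr α * Real.exp (-q) := by
        rw [sub_eq_add_neg, Real.exp_add, Real.exp_log (hrrpos α hαS)]
      rw [h1, h2, h3, h4, hv]
      push_cast
      ring
    -- gradient equations at the witness
    have hderivS : ∀ j, (∑ α ∈ S, c α * (α j : ℂ) * ∏ i, zs i ^ (α i)) = 0 := by
      intro j
      calc (∑ α ∈ S, c α * (α j : ℂ) * ∏ i, zs i ^ (α i))
          = ((Real.exp (-q) : ℝ) : ℂ) * ∑ α ∈ S, c α * (α j : ℂ) * v α := by
            rw [Finset.mul_sum]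
            refine Finset.sum_congr rfl fun α hα => ?_
            rw [hmonos α hα]
            ring
        _ = 0 := by rw [hLS j, mul_zero]
    -- Euler relation gives the value equation
    have hmC : ∀ α ∈ S, (∑ j, (α j : ℂ) * (l j : ℂ)) = (m : ℂ) := by
      intro α hα
      have h2 : ((∑ j, ca α j * l j : ℝ) : ℂ) = ∑ j, (α j : ℂ) * (l j : ℂ) := by
        simp only [hca]
        push_cast
        rfl
      rw [← h2, hmS α hα]
    have hfS : (∑ α ∈ S, c α * ∏ i, zs i ^ (α i)) = 0 := by
      have hswap : (m : ℂ) * (∑ α ∈ S, c α * ∏ i, zs i ^ (α i))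
          = ∑ j, (l j : ℂ) * (∑ α ∈ S, c α * (α j : ℂ) * ∏ i, zs i ^ (α i)) := by
        calc (m : ℂ) * (∑ α ∈ S, c α * ∏ i, zs i ^ (α i))
            = ∑ α ∈ S, (∑ j, (α j : ℂ) * (l j : ℂ)) * (c α * ∏ i, zs i ^ (α i)) := by
              rw [Finset.mul_sum]
              refine Finset.sum_congr rfl fun α hα => ?_
              rw [hmC α hα]
          _ = ∑ α ∈ S, ∑ j, (l j : ℂ) * (c α * (α j : ℂ) * ∏ i, zs i ^ (α i)) := by
              refine Finset.sum_congr rfl fun α hα => ?_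
              rw [Finset.sum_mul]
              refine Finset.sum_congr rfl fun j _ => ?_
              ring
          _ = ∑ j, ∑ α ∈ S, (l j : ℂ) * (c α * (α j : ℂ) * ∏ i, zs i ^ (α i)) :=
              Finset.sum_comm
          _ = ∑ j, (l j : ℂ) * (∑ α ∈ S, c α * (α j : ℂ) * ∏ i, zs i ^ (α i)) := by
              refine Finset.sum_congr rfl fun j _ => ?_
              rw [Finset.mul_sum]
      have hz : (m : ℂ) * (∑ α ∈ S, c α * ∏ i, zs i ^ (α i)) = 0 := by
        rw [hswap]
        refine Finset.sum_eq_zero fun j _ => ?_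
        rw [hderivS j, mul_zero]
      have hmne : (m : ℂ) ≠ 0 := by
        exact_mod_cast ne_of_gt hmpos
      exact (mul_eq_zero.mp hz).resolve_left hmne
    -- the exposed face
    set Lc : (Fin n → ℝ) →L[ℝ] ℝ := LinearMap.toContinuousLinearMap (ipLin n l) with hLcdef
    have hLcval : ∀ y, Lc y = ∑ i, y i * l i := fun y => rfl
    set Ff : Set (Fin n → ℝ) := {x ∈ convexHull ℝ (ca '' ↑A) |
      ∀ y ∈ convexHull ℝ (ca '' ↑A), Lc y ≤ Lc x} with hFfdef
    have hexp : IsExposed ℝ (convexHull ℝ (ca '' ↑A)) Ff := fun _ => ⟨Lc, hFfdef⟩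
    have hcaΔ : ∀ α ∈ A, ca α ∈ convexHull ℝ (ca '' ↑A) :=
      fun α hα => subset_convexHull ℝ _ ⟨α, hα, rfl⟩
    have hFfS : ∀ α ∈ A, (ca α ∈ Ff ↔ α ∈ S) := by
      intro α hαA
      constructor
      · rintro ⟨hmem, hmax⟩
        have h1 := hmax (ca α₀) (hcaΔ α₀ hα₀A)
        rw [hLcval, hLcval] at h1
        by_contra hαS
        have h2 := hmB α (Finset.mem_sdiff.mpr ⟨hαA, hαS⟩)
        rw [hm] at h2
        simp only [hca] at h1 h2
        linarith
      · intro hαS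
        refine ⟨hcaΔ α hαA, fun y hy => ?_⟩
        rw [hLcval, hLcval]
        have hbd : ∀ y' ∈ A', (∑ i, y' i * l i) ≤ m := by
          intro y' hy'
          obtain ⟨α', hα'A, rfl⟩ := Finset.mem_image.mp hy'
          by_cases hα'S : α' ∈ S
          · exact le_of_eq (hmS α' hα'S)
          · exact le_of_lt (hmB α' (Finset.mem_sdiff.mpr ⟨hα'A, hα'S⟩))
        have hym : (∑ i, y i * l i) ≤ m := by
          refine hull_ip_le A' l m hbd y ?_
          rw [hA'coe]
          exact hy
        rw [hmS α hαS]
        exact hym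
    have hfil : A.filter (fun α => (fun i => ((α i : ℤ) : ℝ)) ∈ Ff) = S := by
      ext β
      rw [Finset.mem_filter]
      constructor
      · rintro ⟨hβA, hβF⟩
        exact (hFfS β hβA).mp hβF
      · intro hβS
        have hβA : β ∈ A := Finset.mem_filter.mp hβS |>.1
        exact ⟨hβA, (hFfS β hβA).mpr hβS⟩
    by_cases hrank : Module.finrank ℝ (vectorSpan ℝ Ff) = 0
    · -- the face is a point : forces α₀ = 0, contradicting m > 0
      have hbot : vectorSpan ℝ Ff = ⊥ := Submodule.finrank_eq_zero.mp hrank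
      have hSsing : ∀ α ∈ S, α = α₀ := by
        intro α hα
        have hαA : α ∈ A := Finset.mem_filter.mp hα |>.1
        have h1 : ca α ∈ Ff := (hFfS α hαA).mpr hα
        have h2 : ca α₀ ∈ Ff := (hFfS α₀ hα₀A).mpr hα₀S
        have h3 : ca α -ᵥ ca α₀ ∈ vectorSpan ℝ Ff := vsub_mem_vectorSpan ℝ h1 h2
        rw [hbot, Submodule.mem_bot] at h3
        apply hcainj
        have h4 : ca α - ca α₀ = 0 := h3
        rw [sub_eq_zero] at h4
        exact h4
      have hSone : S = {α₀} := Finset.eq_singleton_iff_unique_mem.mpr ⟨hα₀S, hSsing⟩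
      have hvne : v α₀ ≠ 0 := by
        rw [hv]
        refine mul_ne_zero ?_ ?_
        · exact_mod_cast ne_of_gt (hrrpos α₀ hα₀S)
        · exact Finset.prod_ne_zero_iff.mpr fun i _ => zpow_ne_zero _ (hwwne i)
      have hα₀0 : ∀ j, ((α₀ j : ℤ) : ℝ) = 0 := by
        intro j
        have h5 := hLS j
        rw [hSone, Finset.sum_singleton] at h5
        have h6 : (α₀ j : ℂ) = 0 := by
          rcases mul_eq_zero.mp h5 with h | h
          · rcases mul_eq_zero.mp h with h' | h'
            · exact absurd h' (hc α₀ hα₀A)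
            · exact h'
          · exact absurd h hvne
        exact_mod_cast h6
      have hm0 : m = 0 := by
        rw [hm]
        refine Finset.sum_eq_zero fun i _ => ?_
        have : ca α₀ i = 0 := hα₀0 i
        rw [this, zero_mul]
      linarith
    · have hpos : 0 < Module.finrank ℝ (vectorSpan ℝ Ff) := Nat.pos_of_ne_zero hrank
      have hSsubA : S ⊆ A := Finset.filter_subset _ _
      refine hnd Ff hexp hpos ⟨zs, hzsne, ?_, ?_⟩
      · rw [Finset.filter_congr_decidable, hfil]
        exact hfS
      · intro j
        rw [Finset.filter_congr_decidable, hfil]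
        exact hderivS j
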